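/- If a pure ordered complex Ψ = (E, Δ) satisfies the quasi-exchange axiom, then the lexicographically smallest facet B₀ is the unique minimal element of the Gale order on the facets. -/

import Mathlib

variable {α : Type*} [LinearOrder α] [DecidableEq α] [Fintype α]

/-- A (abstract) simplicial complex: a downward closed family of finite sets. -/
def IsComplex (Δ : Finset α → Prop) : Prop :=
  ∀ ⦃s t : Finset α⦄, Δ t → s ⊆ t → Δ s

/-- A simplicial complex with all faces contained in the ground set `E`. -/
def IsComplexOn (E : Finset α) (Δ : Finset α → Prop) : Prop :=
  (∀ ⦃s⦄, Δ s → s ⊆ E) ∧ IsComplex Δ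

/-- A facet (basis): a maximal face. -/
def IsFacet (Δ : Finset α → Prop) (B : Finset α) : Prop :=
  Δ B ∧ ∀ ⦃C⦄, Δ C → B ⊆ C → B = C

/-- A circuit with respect to the ground set `E`: a minimal non-face contained in `E`. -/
def IsCircuitOn (E : Finset α) (Δ : Finset α → Prop) (C : Finset α) : Prop :=
  C ⊆ E ∧ ¬ Δ C ∧ ∀ ⦃D⦄, D ⊂ C → Δ D

/-- A circuit: a minimal non-face. -/
def IsCircuit (Δ : Finset α → Prop) (C : Finset α) : Prop :=
  ¬ Δ C ∧ ∀ ⦃D⦄, D ⊂ C → Δ D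

/-- Purity: all facets have the same cardinality. -/
def IsPure (Δ : Finset α → Prop) : Prop :=
  ∀ ⦃B B'⦄, IsFacet Δ B → IsFacet Δ B' → B.card = B'.card

/-- Lexicographic order on finite sets, comparing sorted element lists:
`B <lex B'` iff the minimum of the symmetric difference lies in `B`. -/
def lexLt (B B' : Finset α) : Prop :=
  ∃ a ∈ B \ B', ∀ b ∈ symmDiff B B', a ≤ b

def lexLe (B B' : Finset α) : Prop := B = B' ∨ lexLt B B'

/-- `B₀` is the lexicographically smallest facet of `Δ`. -/
def IsLexMinFacet (Δ : Finset α → Prop) (B₀ : Finset α) : Prop :=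
  IsFacet Δ B₀ ∧ ∀ ⦃B⦄, IsFacet Δ B → lexLe B₀ B

/-- Gale (componentwise) order: the `i`-th smallest element of `B` is at most
the `i`-th smallest element of `B'`, for all `i` (in particular equal cardinalities). -/
def galeLe (B B' : Finset α) : Prop :=
  List.Forall₂ (· ≤ ·) (Finset.sort B (· ≤ ·)) (Finset.sort B' (· ≤ ·))

/-- Quasi-exchange axiom (without the purity requirement). -/
def QE (Δ : Finset α → Prop) : Prop :=
  ∀ ⦃B₁ B₂⦄, IsFacet Δ B₁ → IsFacet Δ B₂ →
    ∀ b₁ ∈ B₁ \ B₂, (∀ b ∈ B₂ \ B₁, b < b₁) →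
      ∃ b₂ ∈ B₂ \ B₁, IsFacet Δ (insert b₂ (B₁.erase b₁))

/-- Quasi-circuit axiom (with circuits taken relative to the ground set `E`). -/
def QCon (E : Finset α) (Δ : Finset α → Prop) : Prop :=
  ∀ ⦃C₁ C₂⦄, IsCircuitOn E Δ C₁ → IsCircuitOn E Δ C₂ → C₁ ≠ C₂ →
    ∀ c ∈ C₁ ∩ C₂, (∃ m ∈ symmDiff C₁ C₂, c < m) →
      ∃ C₃, IsCircuitOn E Δ C₃ ∧ C₃ ⊆ (C₁ ∪ C₂).erase c

/-- Quasi-circuit axiom (circuits are arbitrary minimal non-faces). -/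
def QC (Δ : Finset α → Prop) : Prop :=
  ∀ ⦃C₁ C₂⦄, IsCircuit Δ C₁ → IsCircuit Δ C₂ → C₁ ≠ C₂ →
    ∀ c ∈ C₁ ∩ C₂, (∃ m ∈ symmDiff C₁ C₂, c < m) →
      ∃ C₃, IsCircuit Δ C₃ ∧ C₃ ⊆ (C₁ ∪ C₂).erase c

/-- `b` is an internally passive element of the facet `B`. -/
def InternallyPassive (Δ : Finset α → Prop) (B : Finset α) (b : α) : Prop :=
  b ∈ B ∧ ∃ b', b' < b ∧ b' ∉ B ∧ IsFacet Δ (insert b' (B.erase b))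

/-- Contraction of a face `I`. -/
def contract (Δ : Finset α → Prop) (I : Finset α) : Finset α → Prop :=
  fun J => Disjoint J I ∧ Δ (J ∪ I)

/-- Quasi-independence axiom: `Δ` is pure and for faces `I₁, I₂` with `|I₁| > |I₂|`,
if `I₁ \ I ⊆ B_{I,0}` for some `I ⊆ I₁ ∩ I₂`, then some `e ∈ I₁ \ I₂` extends `I₂`. -/
def QI (Δ : Finset α → Prop) : Prop :=
  IsPure Δ ∧ ∀ ⦃I₁ I₂ : Finset α⦄, Δ I₁ → Δ I₂ → I₂.card < I₁.card →
    (∃ I, I ⊆ I₁ ∩ I₂ ∧ ∃ B, IsLexMinFacet (contract Δ I) B ∧ I₁ \ I ⊆ B) →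
    ∃ e ∈ I₁ \ I₂, Δ (insert e I₂)

/-- The First Basis Property. -/
inductive FBP : (Finset α → Prop) → Prop
  | rank1 (Δ : Finset α → Prop) (h : ∀ s, Δ s → s.card ≤ 1) : FBP Δ
  | unique (Δ : Finset α → Prop) (B : Finset α) (hB : IsFacet Δ B)
      (hu : ∀ B', IsFacet Δ B' → B' = B) : FBP Δ
  | step (Δ : Finset α → Prop) (B₀ : Finset α) (h₀ : IsLexMinFacet Δ B₀)
      (h1 : ∀ v, Δ {v} → v ∉ B₀ → FBP (contract Δ {v}))
      (h2 : ∀ v, Δ {v} → v ∉ B₀ →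
        ∃ Bv, IsLexMinFacet (contract Δ {v}) Bv ∧ Bv ⊆ B₀) :
      FBP Δ


section StmtFourAux

variable {α : Type*} [LinearOrder α] [DecidableEq α] [Fintype α]

/-- Count characterization helpers. -/
lemma aux_count_lower (B : Finset α) (i : ℕ)
    (hi : i < (Finset.sort B (· ≤ ·)).length) :
    i + 1 ≤ (B.filter (· ≤ (Finset.sort B (· ≤ ·)).get ⟨i, hi⟩)).card := by
  set l := Finset.sort B (· ≤ ·) with hl
  have hnd : l.Nodup := Finset.sort_nodup _ _
  have hsort : l.Pairwise (· ≤ ·) := Finset.pairwise_sort _ _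
  have hsub : (l.take (i+1)).toFinset ⊆ B.filter (· ≤ l.get ⟨i, hi⟩) := by
    intro x hx
    rw [List.mem_toFinset] at hx
    obtain ⟨j, hj, hjx⟩ := List.mem_iff_getElem.mp hx
    have hjlen : j < l.length := lt_of_lt_of_le hj (by
      simpa using (List.length_take_le (i+1) l))
    have hji : j < i + 1 := lt_of_lt_of_le hj (by
      simp [List.length_take])
    have hx' : l[j] = x := by
      rw [← hjx]; exact (List.getElem_take ..).symm
    have hmem : x ∈ B := by
      rw [← Finset.mem_sort (α := α) (s := B) (r := (· ≤ ·)), ← hl, ← hx']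
      exact List.getElem_mem _
    have hle : x ≤ l.get ⟨i, hi⟩ := by
      rw [← hx']
      exact hsort.rel_get_of_le (by simpa using Nat.lt_succ_iff.mp hji)
    simp only [Finset.mem_filter]
    exact ⟨hmem, hle⟩
  have hcard : (l.take (i+1)).toFinset.card = i + 1 := by
    rw [List.toFinset_card_of_nodup (hnd.sublist (List.take_sublist _ _))]
    simp [List.length_take]
    omega
  calc i + 1 = (l.take (i+1)).toFinset.card := hcard.symm
    _ ≤ _ := Finset.card_le_card hsub

lemma aux_count_upper (B : Finset α) (i : ℕ)
    (hi : i < (Finset.sort B (· ≤ ·)).length) (t : α)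
    (ht : t < (Finset.sort B (· ≤ ·)).get ⟨i, hi⟩) :
    (B.filter (· ≤ t)).card ≤ i := by
  set l := Finset.sort B (· ≤ ·) with hl
  have hsort : l.Pairwise (· ≤ ·) := Finset.pairwise_sort _ _
  have hsub : B.filter (· ≤ t) ⊆ (l.take i).toFinset := by
    intro x hx
    rw [Finset.mem_filter] at hx
    obtain ⟨hxB, hxt⟩ := hx
    have hxl : x ∈ l := by rw [hl, Finset.mem_sort]; exact hxB
    obtain ⟨j, hj, hjx⟩ := List.mem_iff_getElem.mp hxl
    have hji : j < i := by
      by_contra hc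
      push_neg at hc
      have : l.get ⟨i, hi⟩ ≤ l[j] := hsort.rel_get_of_le (by simpa using hc)
      rw [hjx] at this
      exact absurd (lt_of_le_of_lt (le_trans this hxt) ht) (lt_irrefl _)
    rw [List.mem_toFinset]
    refine List.mem_iff_getElem.mpr ⟨j, ?_, ?_⟩
    · simpa [List.length_take] using ⟨hji, hj⟩
    · rw [List.getElem_take]; exact hjx
  calc (B.filter (· ≤ t)).card ≤ (l.take i).toFinset.card := Finset.card_le_card hsub
    _ ≤ (l.take i).length := List.toFinset_card_le _
    _ ≤ i := List.length_take_le _ _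

/-- Count characterization implies Gale order. -/
lemma aux_gale_of_counts {B B' : Finset α} (hcard : B.card = B'.card)
    (hcount : ∀ t, (B'.filter (· ≤ t)).card ≤ (B.filter (· ≤ t)).card) :
    galeLe B B' := by
  rw [galeLe, List.forall₂_iff_get]
  have hlen : (Finset.sort B (· ≤ ·)).length = (Finset.sort B' (· ≤ ·)).length := by
    simp [Finset.length_sort, hcard]
  refine ⟨hlen, ?_⟩
  intro i h1 h2
  by_contra hlt
  push_neg at hlt
  have hA := aux_count_lower B' i h2
  have hB := aux_count_upper B i h1 _ hlt
  have := hcount ((Finset.sort B' (· ≤ ·)).get ⟨i, h2⟩)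
  omega

/-- Replacement: replacing `m ∈ B` by a smaller `b₂ ∉ B` decreases in count order. -/
lemma aux_counts_replace {B : Finset α} {m b₂ : α} (hm : m ∈ B) (hb₂ : b₂ ∉ B)
    (hlt : b₂ < m) (t : α) :
    (B.filter (· ≤ t)).card ≤ ((insert b₂ (B.erase m)).filter (· ≤ t)).card := by
  apply Finset.card_le_card_of_injOn (fun x => if x = m then b₂ else x)
  · intro x hx
    rw [Finset.mem_coe, Finset.mem_filter] at hx ⊢
    obtain ⟨hxB, hxt⟩ := hx
    by_cases hxm : x = m
    · subst hxm
      simp only [if_pos rfl]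
      exact ⟨Finset.mem_insert_self _ _, le_trans (le_of_lt hlt) hxt⟩
    · simp only [if_neg hxm]
      exact ⟨Finset.mem_insert_of_mem (Finset.mem_erase.mpr ⟨hxm, hxB⟩), hxt⟩
  · intro x hx y hy hxy
    simp only [Finset.mem_coe, Finset.mem_filter] at hx hy
    by_cases hxm : x = m <;> by_cases hym : y = m
    · rw [hxm, hym]
    · simp only [if_pos hxm, if_neg hym] at hxy
      exact absurd (hxy ▸ hy.1) hb₂
    · simp only [if_neg hxm, if_pos hym] at hxy
      exact absurd (hxy ▸ hx.1) hb₂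
    · simpa only [if_neg hxm, if_neg hym] using hxy

end StmtFourAux

/-- in a pure complex satisfying the quasi-exchange axiom, the
lexicographically smallest facet is the unique minimal element of the Gale order. -/
theorem stmt4 (E : Finset α) (Δ : Finset α → Prop) (hΔ : IsComplexOn E Δ)
    (hpure : IsPure Δ) (hQE : QE Δ) (B₀ : Finset α) (hB₀ : IsLexMinFacet Δ B₀) :
    (∀ B, IsFacet Δ B → galeLe B₀ B) ∧
    (∀ B, IsFacet Δ B → (∀ B', IsFacet Δ B' → galeLe B' B → B' = B) → B = B₀) :=  by
  -- count order predicate between B₀ and any facet, by induction on |B \ B₀|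
  have hcard0 : ∀ {B}, IsFacet Δ B → B₀.card = B.card := fun hB => hpure hB₀.1 hB
  have symm_ne : ∀ {B : Finset α}, IsFacet Δ B → B ≠ B₀ → (symmDiff B B₀).Nonempty := by
    intro B _ hne
    rw [Finset.nonempty_iff_ne_empty]
    intro h
    exact hne (symmDiff_eq_bot.mp h)
  have main : ∀ n : ℕ, ∀ B, IsFacet Δ B → (B \ B₀).card ≤ n →
      ∀ t, (B.filter (· ≤ t)).card ≤ (B₀.filter (· ≤ t)).card := by
    intro n
    induction n with
    | zero =>
      intro B hB hle t
      have hsub : B ⊆ B₀ := by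
        rw [← Finset.sdiff_eq_empty_iff_subset]
        exact Finset.card_eq_zero.mp (Nat.le_zero.mp hle)
      have : B = B₀ := Finset.eq_of_subset_of_card_le hsub (le_of_eq (hcard0 hB))
      rw [this]
    | succ n ih =>
      intro B hB hle t
      by_cases hne : B = B₀
      · rw [hne]
      · have hnon := symm_ne hB hne
        set m := (symmDiff B B₀).max' hnon with hm
        have hmmem : m ∈ symmDiff B B₀ := Finset.max'_mem _ _
        have hmax : ∀ b ∈ symmDiff B B₀, b ≤ m := fun b hb => Finset.le_max' _ _ hb
        -- m ∈ B \ B₀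
        have hmB : m ∈ B \ B₀ := by
          rcases Finset.mem_symmDiff.mp hmmem with ⟨h1, h2⟩ | ⟨h1, h2⟩
          · exact Finset.mem_sdiff.mpr ⟨h1, h2⟩
          · -- m ∈ B₀ \ B : contradiction with lex minimality
            exfalso
            have hm0 : m ∈ B₀ \ B := Finset.mem_sdiff.mpr ⟨h1, h2⟩
            have hsmall : ∀ b ∈ B \ B₀, b < m := by
              intro b hb
              have hbm := hmax b (by
                rw [Finset.mem_symmDiff]
                exact Or.inl ⟨(Finset.mem_sdiff.mp hb).1, (Finset.mem_sdiff.mp hb).2⟩)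
              rcases lt_or_eq_of_le hbm with h | h
              · exact h
              · exact absurd (h ▸ (Finset.mem_sdiff.mp hb).1) h2
            obtain ⟨b₂, hb₂mem, hb₂fac⟩ := hQE hB₀.1 hB m hm0 hsmall
            have hb₂B : b₂ ∈ B := (Finset.mem_sdiff.mp hb₂mem).1
            have hb₂B₀ : b₂ ∉ B₀ := (Finset.mem_sdiff.mp hb₂mem).2
            have hb₂lt : b₂ < m := hsmall b₂ (Finset.mem_sdiff.mpr ⟨hb₂B, hb₂B₀⟩)
            rcases hB₀.2 hb₂fac with heq | ⟨a, ha, hamin⟩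
            · exact hb₂B₀ (heq ▸ Finset.mem_insert_self b₂ _)
            · have haB₀ : a ∈ B₀ := (Finset.mem_sdiff.mp ha).1
              have haB' : a ∉ insert b₂ (B₀.erase m) := (Finset.mem_sdiff.mp ha).2
              have ham : a = m := by
                by_contra hc
                exact haB' (Finset.mem_insert_of_mem (Finset.mem_erase.mpr ⟨hc, haB₀⟩))
              have : a ≤ b₂ := hamin b₂ (by
                rw [Finset.mem_symmDiff]
                exact Or.inr ⟨Finset.mem_insert_self _ _, hb₂B₀⟩)
              rw [ham] at this
              exact absurd (lt_of_le_of_lt this hb₂lt) (lt_irrefl _)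
        -- apply QE to exchange m out of B
        have hsmall : ∀ b ∈ B₀ \ B, b < m := by
          intro b hb
          have hbm := hmax b (by
            rw [Finset.mem_symmDiff]
            exact Or.inr ⟨(Finset.mem_sdiff.mp hb).1, (Finset.mem_sdiff.mp hb).2⟩)
          rcases lt_or_eq_of_le hbm with h | h
          · exact h
          · exact absurd (h ▸ (Finset.mem_sdiff.mp hb).1) (Finset.mem_sdiff.mp hmB).2
        obtain ⟨b₂, hb₂mem, hb₂fac⟩ := hQE hB hB₀.1 m hmB hsmall
        have hb₂B₀ : b₂ ∈ B₀ := (Finset.mem_sdiff.mp hb₂mem).1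
        have hb₂B : b₂ ∉ B := (Finset.mem_sdiff.mp hb₂mem).2
        have hb₂lt : b₂ < m := hsmall b₂ (Finset.mem_sdiff.mpr ⟨hb₂B₀, hb₂B⟩)
        have hmB' : m ∈ B := (Finset.mem_sdiff.mp hmB).1
        have hmB₀ : m ∉ B₀ := (Finset.mem_sdiff.mp hmB).2
        -- the new facet is strictly closer to B₀
        have hclose : ((insert b₂ (B.erase m)) \ B₀).card ≤ n := by
          have hsub : (insert b₂ (B.erase m)) \ B₀ ⊆ (B \ B₀).erase m := by
            intro x hx
            rw [Finset.mem_sdiff] at hx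
            obtain ⟨hx1, hx2⟩ := hx
            rcases Finset.mem_insert.mp hx1 with h | h
            · exact absurd (h ▸ hb₂B₀) hx2
            · rw [Finset.mem_erase] at h
              exact Finset.mem_erase.mpr ⟨h.1, Finset.mem_sdiff.mpr ⟨h.2, hx2⟩⟩
          calc ((insert b₂ (B.erase m)) \ B₀).card ≤ ((B \ B₀).erase m).card :=
                Finset.card_le_card hsub
            _ = (B \ B₀).card - 1 := Finset.card_erase_of_mem hmB
            _ ≤ n := by omega
        have hIH := ih _ hb₂fac hclose t
        exact le_trans (aux_counts_replace hmB' hb₂B hb₂lt t) hIH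
  have key : ∀ B, IsFacet Δ B → galeLe B₀ B := by
    intro B hB
    exact aux_gale_of_counts (hcard0 hB) (main (B \ B₀).card B hB le_rfl)
  refine ⟨key, ?_⟩
  intro B hB hmin
  exact (hmin B₀ hB₀.1 (key B hB)).symm
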